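/- Let 𝒜 be a finite alphabet with d ≥ 2 symbols, let π = (π₀, π₁) be an irreducible combinatorial data on 𝒜, let ε ∈ {0,1}, and let π' = r_ε(π). Then Θ_{π,ε}(C^u_π) ⊆ C^u_{π'}, where C^u_π = −Ω_π(T⁺_π) and T⁺_π = {τ ∈ ℝ^𝒜 : Σ_{α: π₀(α) ≤ k} τ_α > 0 and Σ_{α: π₁(α) ≤ k} τ_α < 0 for every 1 ≤ k ≤ d−1}. -/

import Mathlib

open Matrix

/-- The top element of `Fin d` (corresponding to the value `d` in `{1, …, d}`). -/
def finTop (d : ℕ) (hd : 0 < d) : Fin d := ⟨d - 1, by omega⟩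

/-- The matrix `Ω_π` associated to the combinatorial data `π = (p0, p1)`. -/
def rvOmega {A : Type*} [Fintype A] (d : ℕ) (p0 p1 : A ≃ Fin d) :
    Matrix A A ℝ :=
  Matrix.of fun α β =>
    if p1 β < p1 α ∧ p0 α < p0 β then (1 : ℝ)
    else if p1 α < p1 β ∧ p0 β < p0 α then -1
    else 0

/-- The combinatorial data `π = (p0, p1)` is irreducible. -/
def rvIrreducible {A : Type*} (d : ℕ) (p0 p1 : A ≃ Fin d) : Prop :=
  ∀ j : ℕ, 1 ≤ j → j ≤ d - 1 →
    {α : A | (p0 α : ℕ) < j} ≠ {α : A | (p1 α : ℕ) < j}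

/-- The Rauzy–Veech update of the loser-side permutation; `e = π_ε` (winner side),
`f = π_{1−ε}` (the side being updated). -/
def rvUpdate {A : Type*} (d : ℕ) (hd : 0 < d) (e f : A ≃ Fin d) (α : A) : Fin d :=
  haveI : NeZero d := ⟨hd.ne'⟩
  if f α ≤ f (e.symm (finTop d hd)) then f α
  else if f α < finTop d hd then f α + 1
  else f (e.symm (finTop d hd)) + 1

/-- The Rauzy–Veech matrix `Θ_{π,ε} = I + E_{α(1−ε), α(ε)}`. -/
def rvTheta {A : Type*} [Fintype A] [DecidableEq A] (d : ℕ) (hd : 0 < d)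
    (e f : A ≃ Fin d) : Matrix A A ℝ :=
  1 + Matrix.single (f.symm (finTop d hd)) (e.symm (finTop d hd)) 1

/-- The convex cone `T⁺_π`: vectors `τ` with `Σ_{π₀(α) ≤ k} τ_α > 0` and
`Σ_{π₁(α) ≤ k} τ_α < 0` for every `1 ≤ k ≤ d − 1`.  (Values in `Fin d` are
identified with `{1,…,d}`, so `πᵢ(α) ≤ k ↔ (pᵢ α : ℕ) < k`.) -/
def rvTplus {A : Type*} [Fintype A] (d : ℕ) (p0 p1 : A ≃ Fin d) : Set (A → ℝ) :=
  {τ : A → ℝ | ∀ k : ℕ, 1 ≤ k → k ≤ d - 1 →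
    (0 < ∑ α ∈ Finset.univ.filter (fun α => (p0 α : ℕ) < k), τ α) ∧
    (∑ α ∈ Finset.univ.filter (fun α => (p1 α : ℕ) < k), τ α) < 0}

/-- The unstable cone `C^u_π = −Ω_π(T⁺_π)`. -/
def rvConeU {A : Type*} [Fintype A] (d : ℕ) (p0 p1 : A ≃ Fin d) : Set (A → ℝ) :=
  (fun τ => -((rvOmega d p0 p1).mulVec τ)) '' rvTplus d p0 p1

section Aux

variable {A : Type*} [Fintype A] [DecidableEq A]

omit [DecidableEq A] in
lemma rvOmega_apply (d : ℕ) (p0 p1 : A ≃ Fin d) (α β : A) :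
    rvOmega d p0 p1 α β =
      if (p1 β : ℕ) < (p1 α : ℕ) ∧ (p0 α : ℕ) < (p0 β : ℕ) then (1:ℝ)
      else if (p1 α : ℕ) < (p1 β : ℕ) ∧ (p0 β : ℕ) < (p0 α : ℕ) then -1 else 0 := by
  simp only [rvOmega, of_apply, Fin.lt_def]

omit [DecidableEq A] in
lemma rvOmega_swap (d : ℕ) (p0 p1 : A ≃ Fin d) :
    rvOmega d p1 p0 = -(rvOmega d p0 p1) := by
  ext α β
  rw [Matrix.neg_apply, rvOmega_apply, rvOmega_apply]
  split_ifs <;> first | (exfalso; omega) | norm_num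

omit [Fintype A] [DecidableEq A] in
lemma rv_val_top (d : ℕ) (hd : 0 < d) (g : A ≃ Fin d) (α : A) :
    (g α : ℕ) = d - 1 ↔ α = g.symm (finTop d hd) := by
  rw [Equiv.eq_symm_apply]
  constructor
  · intro h; exact Fin.ext (by simpa [finTop] using h)
  · intro h; rw [h]; rfl

lemma rv_fin_add_one (d : ℕ) (hd : 2 ≤ d) (x : Fin d) (hx : (x : ℕ) + 1 < d) :
    haveI : NeZero d := ⟨by omega⟩
    ((x + 1 : Fin d) : ℕ) = (x : ℕ) + 1 := by
  haveI : NeZero d := ⟨by omega⟩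
  rw [Fin.val_add, Fin.val_one', Nat.mod_eq_of_lt (show 1 < d by omega),
    Nat.mod_eq_of_lt hx]

omit [Fintype A] [DecidableEq A] in
lemma rv_update_val (d : ℕ) (hd : 2 ≤ d) (e f : A ≃ Fin d) (α : A) :
    ((rvUpdate d (by omega) e f α : Fin d) : ℕ) =
      if (f α : ℕ) ≤ (f (e.symm (finTop d (by omega))) : ℕ) then (f α : ℕ)
      else if (f α : ℕ) < d - 1 then (f α : ℕ) + 1
      else (f (e.symm (finTop d (by omega))) : ℕ) + 1 := by
  unfold rvUpdate
  have hlt : ∀ x : Fin d, (x < finTop d (by omega : (0:ℕ) < d)) ↔ ((x:ℕ) < d - 1) := by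
    intro x; rw [Fin.lt_def]; rfl
  have hle : ∀ x y : Fin d, (x ≤ y) ↔ ((x:ℕ) ≤ (y:ℕ)) := fun x y => Iff.rfl
  split_ifs with h1 h2 h3 h4 h5 h6 h7 h8 <;>
    first
      | rfl
      | (exfalso; rw [hle] at *; rw [hlt] at *; omega)
      | (rw [rv_fin_add_one d hd]; rw [hlt] at *; omega)
      | (exfalso; revert h1; rw [hle]; omega)

omit [DecidableEq A] in
lemma rvTplus_neg (d : ℕ) (p0 p1 : A ≃ Fin d) (τ : A → ℝ) :
    τ ∈ rvTplus d p0 p1 ↔ (-τ) ∈ rvTplus d p1 p0 := by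
  simp only [rvTplus, Set.mem_setOf_eq, Pi.neg_apply, Finset.sum_neg_distrib]
  constructor <;> intro h k h1 h2 <;> obtain ⟨ha, hb⟩ := h k h1 h2 <;>
    exact ⟨by linarith, by linarith⟩

lemma rvConeU_swap (d : ℕ) (p0 p1 : A ≃ Fin d) :
    rvConeU d p1 p0 = rvConeU d p0 p1 := by
  unfold rvConeU
  ext h
  simp only [Set.mem_image]
  constructor
  · rintro ⟨τ, hτ, rfl⟩
    refine ⟨-τ, (rvTplus_neg d p1 p0 τ).1 hτ, ?_⟩
    rw [rvOmega_swap d p0 p1]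
    simp [Matrix.neg_mulVec, Matrix.mulVec_neg]
  · rintro ⟨τ, hτ, rfl⟩
    refine ⟨-τ, (rvTplus_neg d p0 p1 τ).1 hτ, ?_⟩
    rw [rvOmega_swap d p0 p1]
    simp [Matrix.neg_mulVec, Matrix.mulVec_neg]

lemma rv_std_mulVec (L W : A) (v : A → ℝ) (α : A) :
    (Matrix.single L W (1:ℝ)).mulVec v α = if α = L then v W else 0 := by
  simp only [mulVec, dotProduct, Matrix.single, of_apply, ite_and, ite_mul, one_mul,
    zero_mul]
  by_cases h : α = L
  · subst h; simp
  · rw [if_neg h]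
    refine Finset.sum_eq_zero fun β _ => ?_
    rw [if_neg (fun h' => h h'.symm)]

/-- The core lemma: the `ε = false` shape.  `e` is the winner-side permutation,
`f` the loser-side (updated) one. -/
lemma rv_core (d : ℕ) (hd : 2 ≤ d) (e f f' : A ≃ Fin d)
    (hWL : e.symm (finTop d (by omega)) ≠ f.symm (finTop d (by omega)))
    (hf' : ∀ α, f' α = rvUpdate d (by omega) e f α) :
    (rvTheta d (by omega) e f).mulVec '' rvConeU d e f ⊆ rvConeU d e f' := by
  have hd0 : 0 < d := by omega
  set W : A := e.symm (finTop d hd0) with hWdef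
  set L : A := f.symm (finTop d hd0) with hLdef
  have hfL : (f L : ℕ) = d - 1 := (rv_val_top d hd0 f L).2 rfl
  have heW : (e W : ℕ) = d - 1 := (rv_val_top d hd0 e W).2 rfl
  have hm : (f W : ℕ) < d - 1 := by
    have h1 := (f W).isLt
    have h2 : (f W : ℕ) ≠ d - 1 := fun h => hWL ((rv_val_top d hd0 f W).1 h)
    omega
  have heL : (e L : ℕ) < d - 1 := by
    have h1 := (e L).isLt
    have h2 : (e L : ℕ) ≠ d - 1 := fun h => hWL ((rv_val_top d hd0 e L).1 h).symm
    omega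
  set m : ℕ := (f W : ℕ) with hmdef
  have hu : ∀ α, ((f' α : Fin d) : ℕ) =
      if (f α : ℕ) ≤ m then (f α : ℕ)
      else if (f α : ℕ) < d - 1 then (f α : ℕ) + 1 else m + 1 := by
    intro α
    rw [hf' α, rv_update_val d hd e f α]
  have hLW : L ≠ W := fun h => hWL h.symm
  -- enter the image
  rintro x ⟨h, ⟨τ, hτ, rfl⟩, rfl⟩
  set τ' : A → ℝ := fun β => τ β - if β = W then τ L else 0 with hτ'def
  have hsum : ∀ S : Finset A,
      ∑ β ∈ S, τ' β = (∑ β ∈ S, τ β) - (if W ∈ S then τ L else 0) := by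
    intro S
    rw [hτ'def]
    rw [Finset.sum_sub_distrib, Finset.sum_ite_eq' S W (fun _ => τ L)]
  -- membership of τ' in the new cone T⁺
  have hτ'mem : τ' ∈ rvTplus d e f' := by
    intro k hk1 hk2
    obtain ⟨hpos, hneg⟩ := hτ k hk1 hk2
    constructor
    · have hWn : W ∉ Finset.univ.filter (fun α => ((e α : Fin d) : ℕ) < k) := by
        simp only [Finset.mem_filter, Finset.mem_univ, true_and, heW]
        omega
      rw [hsum, if_neg hWn]
      linarith
    · by_cases hcase : k ≤ m + 1
      · have hset : Finset.univ.filter (fun α => ((f' α : Fin d) : ℕ) < k)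
            = Finset.univ.filter (fun α => ((f α : Fin d) : ℕ) < k) := by
          ext α
          simp only [Finset.mem_filter, Finset.mem_univ, true_and]
          rw [hu α]
          have := (f α).isLt
          split_ifs <;> omega
        rw [hset, hsum]
        by_cases hk : k ≤ m
        · have hWn : W ∉ Finset.univ.filter (fun α => ((f α : Fin d) : ℕ) < k) := by
            simp only [Finset.mem_filter, Finset.mem_univ, true_and]
            omega
          rw [if_neg hWn]
          linarith
        · have hkm : k = m + 1 := by omega
          have hWi : W ∈ Finset.univ.filter (fun α => ((f α : Fin d) : ℕ) < k) := by
            simp only [Finset.mem_filter, Finset.mem_univ, true_and]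
            omega
          rw [if_pos hWi]
          subst hkm
          have hsplit : Finset.univ.filter (fun α => ((f α : Fin d) : ℕ) < m + 1)
              = insert W (Finset.univ.filter fun α => ((f α : Fin d) : ℕ) < m) := by
            ext α
            simp only [Finset.mem_insert, Finset.mem_filter, Finset.mem_univ, true_and]
            constructor
            · intro hh
              by_cases hαW : α = W
              · exact Or.inl hαW
              · right
                have : (f α : ℕ) ≠ m := fun h2 => hαW (f.injective (Fin.ext h2))
                omega
            · rintro (rfl | hh) <;> omega
          have hWni : W ∉ Finset.univ.filter (fun α => ((f α : Fin d) : ℕ) < m) := by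
            simp only [Finset.mem_filter, Finset.mem_univ, true_and]; omega
          rw [hsplit, Finset.sum_insert hWni]
          have hSm : (∑ α ∈ Finset.univ.filter (fun α => ((f α : Fin d) : ℕ) < m), τ α)
              ≤ 0 := by
            rcases Nat.eq_zero_or_pos m with h0 | h0
            · simp [h0]
            · exact le_of_lt (hτ m h0 (by omega)).2
          have ht1 := (hτ (d-1) (by omega) le_rfl).1
          have ht2 := (hτ (d-1) (by omega) le_rfl).2
          have he1 : Finset.univ.filter (fun α => ((e α : Fin d) : ℕ) < d - 1)
              = Finset.univ.erase W := by
            ext α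
            simp only [Finset.mem_filter, Finset.mem_univ, true_and, Finset.mem_erase,
              and_true]
            constructor
            · intro hh hαW; subst hαW; omega
            · intro hh
              have h2 : (e α : ℕ) ≠ d - 1 := fun h3 => hh ((rv_val_top d hd0 e α).1 h3)
              have := (e α).isLt
              omega
          have hf1 : Finset.univ.filter (fun α => ((f α : Fin d) : ℕ) < d - 1)
              = Finset.univ.erase L := by
            ext α
            simp only [Finset.mem_filter, Finset.mem_univ, true_and, Finset.mem_erase,
              and_true]
            constructor
            · intro hh hαL; subst hαL; omega
            · intro hh
              have h2 : (f α : ℕ) ≠ d - 1 := fun h3 => hh ((rv_val_top d hd0 f α).1 h3)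
              have := (f α).isLt
              omega
          rw [he1, Finset.sum_erase_eq_sub (Finset.mem_univ W)] at ht1
          rw [hf1, Finset.sum_erase_eq_sub (Finset.mem_univ L)] at ht2
          linarith
      · -- k ≥ m + 2
        have hset : Finset.univ.filter (fun α => ((f' α : Fin d) : ℕ) < k)
            = insert L (Finset.univ.filter fun α => ((f α : Fin d) : ℕ) < k - 1) := by
          ext α
          simp only [Finset.mem_insert, Finset.mem_filter, Finset.mem_univ, true_and]
          have hiff : α = L ↔ (f α : ℕ) = d - 1 :=
            ⟨fun h => h ▸ hfL, fun h => (rv_val_top d hd0 f α).1 h⟩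
          rw [hiff, hu α]
          have := (f α).isLt
          split_ifs <;> omega
        have hLni : L ∉ Finset.univ.filter (fun α => ((f α : Fin d) : ℕ) < k - 1) := by
          simp only [Finset.mem_filter, Finset.mem_univ, true_and, hfL]; omega
        have hWi : W ∈ Finset.univ.filter (fun α => ((f α : Fin d) : ℕ) < k - 1) := by
          simp only [Finset.mem_filter, Finset.mem_univ, true_and]
          omega
        rw [hset, Finset.sum_insert hLni, hsum, if_pos hWi]
        have hτ'L : τ' L = τ L := by rw [hτ'def]; simp [hLW]
        have hneg2 := (hτ (k-1) (by omega) (by omega)).2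
        rw [hτ'L]
        linarith
  -- the matrix rows
  have hfval : ∀ α, α ≠ L → (f α : ℕ) < d - 1 := by
    intro α hα
    have h1 := (f α).isLt
    have h2 : (f α : ℕ) ≠ d - 1 := fun h => hα ((rv_val_top d hd0 f α).1 h)
    omega
  have heval : ∀ α, α ≠ W → (e α : ℕ) < d - 1 := by
    intro α hα
    have h1 := (e α).isLt
    have h2 : (e α : ℕ) ≠ d - 1 := fun h => hα ((rv_val_top d hd0 e α).1 h)
    omega
  have hf'L : ((f' L : Fin d) : ℕ) = m + 1 := by
    rw [hu L, hfL]
    split_ifs <;> omega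
  have himp : ∀ α, (f α : ℕ) = m ∨ (e α : ℕ) < d - 1 := by
    intro α
    by_cases hαW : α = W
    · subst hαW; exact Or.inl rfl
    · exact Or.inr (heval α hαW)
  have hrow : ∀ α β, α ≠ L →
      rvOmega d e f' α β = rvOmega d e f α β
        + (if β = L then rvOmega d e f α W else 0) := by
    intro α β hα
    have hfα := hfval α hα
    by_cases hβ : β = L
    · subst hβ
      rw [if_pos rfl, rvOmega_apply, rvOmega_apply, rvOmega_apply, hu α, hf'L, hfL, heW]
      have hαL : (e α : ℕ) ≠ (e L : ℕ) := fun h => hα (e.injective (Fin.ext h))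
      have h1 := (e α).isLt
      have h2 := himp α
      split_ifs <;> first | (exfalso; omega) | norm_num
    · rw [if_neg hβ, add_zero, rvOmega_apply, rvOmega_apply, hu α, hu β]
      have hfβ := hfval β hβ
      split_ifs <;> first | (exfalso; omega) | norm_num
  have hrowL : ∀ β, rvOmega d e f' L β
      = rvOmega d e f L β + rvOmega d e f W β + (if β = L then 1 else 0) := by
    intro β
    by_cases hβ : β = L
    · subst hβ
      rw [if_pos rfl, rvOmega_apply, rvOmega_apply, rvOmega_apply, hfL, heW]
      have := heL
      have h1 := (e L).isLt
      split_ifs <;> first | (exfalso; omega) | norm_num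
    · rw [if_neg hβ, add_zero, rvOmega_apply, rvOmega_apply, rvOmega_apply,
        hu β, hf'L, hfL, heW]
      have hfβ := hfval β hβ
      have hβL : (e β : ℕ) ≠ (e L : ℕ) := fun h => hβ (e.injective (Fin.ext h))
      have h1 := (e β).isLt
      have h2 := himp β
      have := heL
      split_ifs <;> first | (exfalso; omega) | norm_num
  have hΩLW : rvOmega d e f L W = 1 := by
    rw [rvOmega_apply, hfL, heW]
    have := heL
    rw [if_pos ⟨by omega, by omega⟩]
  have hΩWW : rvOmega d e f W W = 0 := by
    rw [rvOmega_apply]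
    simp
  have hΩLL : rvOmega d e f L L = 0 := by
    rw [rvOmega_apply]
    simp
  have hΩWL : rvOmega d e f W L = -1 := by
    rw [rvOmega_apply, hfL, heW]
    have := heL
    rw [if_neg (by omega), if_pos ⟨by omega, by omega⟩]
  have hΩ'LW : rvOmega d e f' L W = 1 := by
    rw [hrowL W, if_neg (fun h => hLW h.symm), hΩLW, hΩWW]
    ring
  -- the key pointwise identity for mulVec
  have hmain : ∀ α, (rvOmega d e f').mulVec τ' α
      = (rvOmega d e f).mulVec τ α
        + (if α = L then (rvOmega d e f).mulVec τ W else 0) := by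
    intro α
    by_cases hα : α = L
    · subst hα
      rw [if_pos rfl]
      simp only [mulVec, dotProduct]
      have hpt : ∀ β, rvOmega d e f' L β * τ' β
          = (rvOmega d e f L β * τ β + rvOmega d e f W β * τ β)
            + ((if β = L then τ L else 0)
               + (if β = W then -((rvOmega d e f L W + rvOmega d e f W W) * τ L)
                  else 0)) := by
        intro β
        rw [hrowL β]
        by_cases hβL : β = L
        · subst hβL
          rw [if_pos rfl, if_pos rfl, if_neg hLW]
          have h1 : τ' L = τ L := by rw [hτ'def]; simp [hLW]
          rw [h1, hΩLL, hΩWL]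
          ring
        · rw [if_neg hβL, if_neg hβL, add_zero]
          by_cases hβW : β = W
          · subst hβW
            rw [if_pos rfl]
            have h1 : τ' W = τ W - τ L := by rw [hτ'def]; simp
            rw [h1]
            ring
          · rw [if_neg hβW]
            have h1 : τ' β = τ β := by rw [hτ'def]; simp [hβW]
            rw [h1]; ring
      rw [Finset.sum_congr rfl fun β _ => hpt β]
      rw [Finset.sum_add_distrib, Finset.sum_add_distrib, Finset.sum_add_distrib,
        Finset.sum_ite_eq' Finset.univ L (fun _ => τ L),
        Finset.sum_ite_eq' Finset.univ W
          (fun _ => -((rvOmega d e f L W + rvOmega d e f W W) * τ L)),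
        if_pos (Finset.mem_univ L), if_pos (Finset.mem_univ W), hΩLW, hΩWW]
      ring
    · rw [if_neg hα]
      simp only [mulVec, dotProduct]
      have hpt : ∀ β, rvOmega d e f' α β * τ' β
          = rvOmega d e f α β * τ β
            + ((if β = L then rvOmega d e f α W * τ L else 0)
               + (if β = W then -(rvOmega d e f α W * τ L) else 0)) := by
        intro β
        rw [hrow α β hα]
        by_cases hβL : β = L
        · subst hβL
          rw [if_pos rfl, if_pos rfl, if_neg hLW]
          have h1 : τ' L = τ L := by rw [hτ'def]; simp [hLW]
          rw [h1]
          ring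
        · rw [if_neg hβL, if_neg hβL]
          by_cases hβW : β = W
          · subst hβW
            rw [if_pos rfl]
            have h1 : τ' W = τ W - τ L := by rw [hτ'def]; simp
            rw [h1]
            ring
          · rw [if_neg hβW]
            have h1 : τ' β = τ β := by rw [hτ'def]; simp [hβW]
            rw [h1]; ring
      rw [Finset.sum_congr rfl fun β _ => hpt β]
      rw [Finset.sum_add_distrib, Finset.sum_add_distrib,
        Finset.sum_ite_eq' Finset.univ L (fun _ => rvOmega d e f α W * τ L),
        Finset.sum_ite_eq' Finset.univ W (fun _ => -(rvOmega d e f α W * τ L)),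
        if_pos (Finset.mem_univ L), if_pos (Finset.mem_univ W)]
      ring
  -- conclude
  have htheta : ∀ (v : A → ℝ) (α : A), (rvTheta d hd0 e f).mulVec v α
      = v α + (if α = L then v W else 0) := by
    intro v α
    rw [rvTheta, Matrix.add_mulVec, Matrix.one_mulVec, Pi.add_apply, rv_std_mulVec]
  refine ⟨τ', hτ'mem, ?_⟩
  show -((rvOmega d e f').mulVec τ') = _
  funext α
  simp only [Pi.neg_apply, htheta]
  rw [hmain α]
  split_ifs <;> ring

end Aux

/-- Let `π` be an irreducible combinatorial data on an alphabet with
`d ≥ 2` symbols, `ε ∈ {0,1}` and `π' = r_ε(π)`.  Then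
`Θ_{π,ε}(C^u_π) ⊆ C^u_{π'}`. -/
theorem stmt18 {A : Type*} [Fintype A] [DecidableEq A] (d : ℕ) (hd : 2 ≤ d)
    (hcard : Fintype.card A = d) (π π' : Bool → A ≃ Fin d) (ε : Bool)
    (hirr : rvIrreducible d (π false) (π true))
    (hkeep : π' ε = π ε)
    (hupd : ∀ α, (π' (!ε)) α = rvUpdate d (by omega) (π ε) (π (!ε)) α) :
    (rvTheta d (by omega) (π ε) (π (!ε))).mulVec ''
        rvConeU d (π false) (π true) ⊆ rvConeU d (π' false) (π' true) := by
  have hd0 : 0 < d := by omega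
  have hne : (π false).symm (finTop d hd0) ≠ (π true).symm (finTop d hd0) := by
    intro h
    apply hirr (d - 1) (by omega) le_rfl
    ext α
    simp only [Set.mem_setOf_eq]
    have h0 : ∀ g : A ≃ Fin d, ((g α : ℕ) < d - 1 ↔ α ≠ g.symm (finTop d hd0)) := by
      intro g
      constructor
      · intro hh hc
        exact absurd ((rv_val_top d hd0 g α).2 hc) (by omega)
      · intro hh
        have h2 : (g α : ℕ) ≠ d - 1 := fun hc => hh ((rv_val_top d hd0 g α).1 hc)
        have := (g α).isLt
        omega
    rw [h0 (π false), h0 (π true), h]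
  cases ε with
  | false =>
    rw [hkeep]
    exact rv_core d hd (π false) (π true) (π' true) hne hupd
  | true =>
    rw [rvConeU_swap d (π' true) (π' false), rvConeU_swap d (π true) (π false), hkeep]
    exact rv_core d hd (π true) (π false) (π' false) (fun h => hne h.symm) hupd
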